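/- The Coburn alternative fails on the Hartogs triangle: the symbol φ(ζ) := ζ̄₁ ζ₂³ ∈ L^∞(𝕋ⁿ) is nonzero, the constant function 1 belongs to H²(∂_d△ₙ), and T_{φ,△ₙ}(1) = 0 as well as (T_{φ,△ₙ})*(1) = T_{φ̄,△ₙ}(1) = 0; hence neither T_{φ,△ₙ} nor its adjoint is injective. -/

import Mathlib

open MeasureTheory Filter Topology ComplexConjugate

noncomputable section

instance fact_one_pos : Fact ((0:ℝ) < 1) := ⟨one_pos⟩

abbrev Torus (n : ℕ) := Fin n → AddCircle (1 : ℝ)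

abbrev L2T (n : ℕ) := Lp ℂ 2 (volume : Measure (Torus n))

abbrev LinfT (n : ℕ) := Lp ℂ ⊤ (volume : Measure (Torus n))

def char {n : ℕ} (α : Fin n → ℤ) : Torus n → ℂ := fun x => ∏ j, fourier (α j) (x j)

lemma char_continuous {n : ℕ} (α : Fin n → ℤ) : Continuous (char α) :=
  continuous_finset_prod _ fun j _ => (fourier (α j)).continuous.comp (continuous_apply j)

lemma char_memLp {n : ℕ} (α : Fin n → ℤ) (p : ENNReal) :
    MemLp (char α) p (volume : Measure (Torus n)) := by
  refine (memLp_top_of_bound ((char_continuous α).aestronglyMeasurable) 1 ?_).mono_exponent le_top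
  filter_upwards with x
  simp only [char, norm_prod]
  calc ∏ j, ‖fourier (α j) (x j)‖
      = ∏ j : Fin n, (1:ℝ) := by
        refine Finset.prod_congr rfl fun j _ => ?_
        rw [fourier_apply]; exact Circle.norm_coe _
    _ ≤ 1 := by simp

def charL2 {n : ℕ} (α : Fin n → ℤ) : L2T n := (char_memLp α 2).toLp (char α)

def hardyT (n : ℕ) : Submodule ℂ (L2T n) :=
  (Submodule.span ℂ
    (charL2 '' {α : Fin n → ℤ | ∀ k : Fin n, 0 ≤ (∑ j ∈ Finset.Iic k, α j) + (k.val : ℤ)})).topologicalClosure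

def hardyD (n : ℕ) : Submodule ℂ (L2T n) :=
  (Submodule.span ℂ (charL2 '' {α : Fin n → ℤ | ∀ j, 0 ≤ α j})).topologicalClosure

instance hardyT.completeSpace (n : ℕ) : CompleteSpace (hardyT n) :=
  (Submodule.isClosed_topologicalClosure _).completeSpace_coe

instance hardyD.completeSpace (n : ℕ) : CompleteSpace (hardyD n) :=
  (Submodule.isClosed_topologicalClosure _).completeSpace_coe

def IsToeplitzOn {n : ℕ} (K : Submodule ℂ (L2T n)) (φ : Torus n → ℂ) (T : K →L[ℂ] K) : Prop :=
  ∀ f g : K,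
    (inner ℂ ((g : L2T n)) ((T f : L2T n)) : ℂ) =
      ∫ x, conj ((g : L2T n) x) * (φ x * (f : L2T n) x) ∂volume

def IsCoordMult {n : ℕ} (j : Fin n) (M : hardyT n →L[ℂ] hardyT n) : Prop :=
  ∀ f : hardyT n,
    ((M f : L2T n) : Torus n → ℂ) =ᵐ[volume]
      fun x => fourier 1 (x j) * ((f : L2T n) : Torus n → ℂ) x

def IsHankelT {n : ℕ} (φ : Torus n → ℂ) (H : hardyT n →L[ℂ] L2T n) : Prop :=
  (∀ f : hardyT n, H f ∈ (hardyT n)ᗮ) ∧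
    ∀ f : hardyT n, ∀ g : L2T n, g ∈ (hardyT n)ᗮ →
      (inner ℂ g (H f) : ℂ) = ∫ x, conj (g x) * (φ x * (f : L2T n) x) ∂volume

def IsAnalyticSymbolF {n : ℕ} (φ : Torus n → ℂ) : Prop :=
  ∀ α : Fin n → ℤ, (¬ ∀ k : Fin n, 0 ≤ ∑ j ∈ Finset.Iic k, α j) →
    ∫ x, φ x * char (-α) x ∂(volume : Measure (Torus n)) = 0

def IsInnerSymbolF {n : ℕ} (φ : Torus n → ℂ) : Prop :=
  IsAnalyticSymbolF φ ∧ ∀ᵐ x ∂(volume : Measure (Torus n)), ‖φ x‖ = 1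

def tauMap {n : ℕ} (x : Torus n) : Torus n := fun j => ∑ k ∈ Finset.Ici j, x k

def sigmaMap {n : ℕ} (x : Torus n) : Torus n :=
  fun j => if h : (j : ℕ) + 1 < n then x j - x ⟨(j : ℕ) + 1, h⟩ else x j

def jacF {n : ℕ} (x : Torus n) : ℂ := ∏ j : Fin n, fourier (j.val : ℤ) (x j)

def jacInvF {n : ℕ} (x : Torus n) : ℂ :=
  ∏ j : Fin n, fourier (if j.val = 0 then (0 : ℤ) else -1) (x j)

/-- The symbol `ζ̄₁ ζ₂³`. -/
def coburnSymbol (n : ℕ) : Torus n → ℂ :=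
  char (fun j => if j.val = 0 then (-1 : ℤ) else if j.val = 1 then 3 else 0)

section CoburnAux

instance : IsProbabilityMeasure (volume : Measure (AddCircle (1:ℝ))) :=
  ⟨by rw [AddCircle.measure_univ]; norm_num⟩

instance torusProb (n : ℕ) : IsProbabilityMeasure (volume : Measure (Torus n)) :=
  ⟨by rw [MeasureTheory.volume_pi]; exact measure_univ⟩

lemma circle_integral_fourier (m : ℤ) :
    (∫ x : AddCircle (1:ℝ), fourier m x ∂volume) = if m = 0 then 1 else 0 := by
  split_ifs with h
  · subst h
    simp only [fourier_zero]
    simp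
  · exact integral_eq_zero_of_add_right_eq_neg (fourier_add_half_inv_index h one_pos)

lemma conj_char {n : ℕ} (α : Fin n → ℤ) (x : Torus n) :
    conj (char α x) = char (-α) x := by
  simp only [char, map_prod, Pi.neg_apply, fourier_neg]

lemma char_mul_char {n : ℕ} (α β : Fin n → ℤ) (x : Torus n) :
    char α x * char β x = char (α + β) x := by
  simp only [char, ← Finset.prod_mul_distrib, Pi.add_apply, fourier_add]

lemma char_ne_zero {n : ℕ} (α : Fin n → ℤ) (x : Torus n) : char α x ≠ 0 :=
  Finset.prod_ne_zero_iff.mpr fun j _ => by rw [fourier_apply]; exact Circle.coe_ne_zero _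

lemma integral_char {n : ℕ} (α : Fin n → ℤ) :
    (∫ x, char α x ∂(volume : Measure (Torus n))) = if α = 0 then 1 else 0 := by
  simp only [char]
  rw [MeasureTheory.volume_pi]
  rw [MeasureTheory.integral_fintype_prod_eq_prod
    (f := fun j (z : AddCircle (1:ℝ)) => fourier (α j) z)]
  simp_rw [circle_integral_fourier]
  by_cases h : α = 0
  · simp [h]
  · obtain ⟨j, hj⟩ := Function.ne_iff.mp h
    rw [if_neg h]
    exact Finset.prod_eq_zero (Finset.mem_univ j) (if_neg hj)

lemma charL2_coeFn {n : ℕ} (α : Fin n → ℤ) :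
    ((charL2 α : L2T n) : Torus n → ℂ) =ᵐ[volume] char α :=
  (char_memLp α 2).coeFn_toLp

lemma inner_charL2 {n : ℕ} (α β : Fin n → ℤ) :
    (inner ℂ (charL2 α) (charL2 β) : ℂ) = if α = β then 1 else 0 := by
  rw [MeasureTheory.L2.inner_def]
  rw [integral_congr_ae (g := char (β - α)) ?_]
  · rw [integral_char]
    simp [sub_eq_zero, eq_comm]
  · filter_upwards [charL2_coeFn (n := n) α, charL2_coeFn (n := n) β] with x h1 h2
    rw [RCLike.inner_apply', h1, h2, conj_char, char_mul_char]
    congr 1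
    abel

lemma charL2_mem_hardyT {n : ℕ} (α : Fin n → ℤ)
    (hα : ∀ k : Fin n, 0 ≤ (∑ j ∈ Finset.Iic k, α j) + (k.val : ℤ)) :
    charL2 α ∈ hardyT n :=
  Submodule.le_topologicalClosure _ (Submodule.subset_span ⟨α, hα, rfl⟩)

lemma charL2_mem_orth {n : ℕ} (α : Fin n → ℤ)
    (hα : ¬ ∀ k : Fin n, 0 ≤ (∑ j ∈ Finset.Iic k, α j) + (k.val : ℤ)) :
    charL2 α ∈ (hardyT n)ᗮ := by
  rw [Submodule.mem_orthogonal]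
  intro u hu
  have hspan : ∀ v ∈ Submodule.span ℂ
      (charL2 '' {β : Fin n → ℤ | ∀ k : Fin n, 0 ≤ (∑ j ∈ Finset.Iic k, β j) + (k.val : ℤ)}),
      (inner ℂ v (charL2 α) : ℂ) = 0 := by
    intro v hv
    induction hv using Submodule.span_induction with
    | mem w hw =>
      obtain ⟨β, hβ, rfl⟩ := hw
      rw [inner_charL2, if_neg]
      rintro rfl
      exact hα hβ
    | zero => simp
    | add a b _ _ ha hb => rw [inner_add_left, ha, hb, add_zero]
    | smul c a _ ha => rw [inner_smul_left, ha, mul_zero]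
  have hclosed : IsClosed {v : L2T n | (inner ℂ v (charL2 α) : ℂ) = 0} :=
    isClosed_eq (continuous_id.inner continuous_const) continuous_const
  exact closure_minimal hspan hclosed hu

lemma const_not_ae_eq {n : ℕ} {c d : ℂ} (h : c ≠ d) :
    ¬ ((fun _ : Torus n => c) =ᵐ[volume] fun _ => d) := by
  intro hae
  have hae' := ae_iff.mp hae
  rw [show {a : Torus n | ¬ (fun _ => c) a = (fun _ => d) a} = Set.univ from
    Set.eq_univ_of_forall fun a => by simpa using h] at hae'
  rw [measure_univ] at hae'
  exact one_ne_zero hae'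

lemma toeplitz_zero {n : ℕ} (φ : Torus n → ℂ) (α : Fin n → ℤ)
    (hφ : ∀ x, φ x = char α x)
    (hα : ¬ ∀ k : Fin n, 0 ≤ (∑ j ∈ Finset.Iic k, α j) + (k.val : ℤ))
    (T : hardyT n →L[ℂ] hardyT n) (hT : IsToeplitzOn (hardyT n) φ T)
    (e : hardyT n) (he : ((e : L2T n) : Torus n → ℂ) =ᵐ[volume] fun _ => 1) :
    T e = 0 := by
  have hperp := charL2_mem_orth α hα
  have h0 : (inner ℂ ((T e : L2T n)) ((T e : L2T n)) : ℂ) = 0 := by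
    rw [hT e (T e)]
    have hcongr : (fun x => conj (((T e : hardyT n) : L2T n) x) * (φ x * ((e : L2T n)) x))
        =ᵐ[volume]
        fun x => (inner ℂ (((T e : hardyT n) : L2T n) x) ((charL2 α : L2T n) x) : ℂ) := by
      filter_upwards [he, charL2_coeFn (n := n) α] with x h1 h2
      rw [RCLike.inner_apply', h1, h2, hφ, mul_one]
    rw [integral_congr_ae hcongr, ← MeasureTheory.L2.inner_def]
    exact Submodule.inner_right_of_mem_orthogonal (T e).2 hperp
  exact Subtype.ext (inner_self_eq_zero.mp h0)

end CoburnAux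

set_option maxHeartbeats 4000000 in
/-- The Coburn alternative fails on the Hartogs triangle: for `φ = ζ̄₁ ζ₂³`, the symbol is
nonzero, `1 ∈ H²(∂_d△ₙ)`, `T_{φ,△ₙ}(1) = 0 = (T_{φ,△ₙ})*(1)`, and neither `T_{φ,△ₙ}` nor
its adjoint is injective. -/
theorem stmt19 {n : ℕ} (hn : 2 ≤ n)
    (T S : hardyT n →L[ℂ] hardyT n)
    (hT : IsToeplitzOn (hardyT n) (coburnSymbol n) T)
    (hS : IsToeplitzOn (hardyT n) (fun x => conj (coburnSymbol n x)) S) :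
    ¬ (coburnSymbol n =ᵐ[volume] fun _ => (0 : ℂ)) ∧
    (∃ e : hardyT n, ((e : L2T n) : Torus n → ℂ) =ᵐ[volume] fun _ => (1 : ℂ)) ∧
    (∀ e : hardyT n, (((e : L2T n) : Torus n → ℂ) =ᵐ[volume] fun _ => (1 : ℂ)) →
      T e = 0 ∧ S e = 0) ∧
    S = ContinuousLinearMap.adjoint T ∧
    ¬ Function.Injective (⇑T) ∧
    ¬ Function.Injective (⇑(ContinuousLinearMap.adjoint T)) := by
  set α₀ : Fin n → ℤ := fun j => if j.val = 0 then (-1 : ℤ) else if j.val = 1 then 3 else 0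
    with hα₀def
  have hφ : ∀ x, coburnSymbol n x = char α₀ x := fun _ => rfl
  have h0n : 0 < n := by omega
  have h1n : 1 < n := by omega
  set k0 : Fin n := ⟨0, h0n⟩
  set k1 : Fin n := ⟨1, h1n⟩
  have hIic0 : Finset.Iic k0 = {k0} := by
    ext j
    simp only [Finset.mem_Iic, Finset.mem_singleton, Fin.le_def, Fin.ext_iff, k0]
    omega
  have hIic1 : Finset.Iic k1 = {k0, k1} := by
    ext j
    simp only [Finset.mem_Iic, Finset.mem_insert, Finset.mem_singleton, Fin.le_def,
      Fin.ext_iff, k0, k1]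
    omega
  have hk01 : k0 ≠ k1 := by simp [k0, k1, Fin.ext_iff]
  have hα₀ : ¬ ∀ k : Fin n, 0 ≤ (∑ j ∈ Finset.Iic k, α₀ j) + (k.val : ℤ) := by
    intro h
    have := h k0
    rw [hIic0, Finset.sum_singleton] at this
    simp [α₀, k0] at this
  have hmα₀ : ¬ ∀ k : Fin n, 0 ≤ (∑ j ∈ Finset.Iic k, (-α₀) j) + (k.val : ℤ) := by
    intro h
    have := h k1
    rw [hIic1, Finset.sum_pair hk01] at this
    simp [α₀, k0, k1] at this
  -- the constant function 1
  have hmem : charL2 (0 : Fin n → ℤ) ∈ hardyT n := by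
    refine charL2_mem_hardyT 0 fun k => ?_
    simp
  set e₀ : hardyT n := ⟨charL2 (0 : Fin n → ℤ), hmem⟩ with he₀def
  have he₀ : ((e₀ : L2T n) : Torus n → ℂ) =ᵐ[volume] fun _ => (1 : ℂ) := by
    refine (charL2_coeFn (n := n) 0).trans (Eventually.of_forall fun x => ?_)
    simp [char, fourier_zero]
  -- the kill lemma applies to both T and S
  have hkill : ∀ e : hardyT n,
      (((e : L2T n) : Torus n → ℂ) =ᵐ[volume] fun _ => (1 : ℂ)) → T e = 0 ∧ S e = 0 := by
    intro e he
    constructor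
    · exact toeplitz_zero (coburnSymbol n) α₀ hφ hα₀ T hT e he
    · refine toeplitz_zero (fun x => conj (coburnSymbol n x)) (-α₀) ?_ hmα₀ S hS e he
      intro x
      show conj (coburnSymbol n x) = char (-α₀) x
      rw [hφ, conj_char]
  -- adjoint
  have hadj : S = ContinuousLinearMap.adjoint T := by
    rw [ContinuousLinearMap.eq_adjoint_iff]
    intro x y
    rw [Submodule.coe_inner, Submodule.coe_inner, ← inner_conj_symm, hS x y, hT y x,
      ← integral_conj]
    refine integral_congr_ae (Eventually.of_forall fun t => ?_)
    simp only [map_mul, Complex.conj_conj]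
    ring
  refine ⟨?_, ⟨e₀, he₀⟩, hkill, hadj, ?_, ?_⟩
  · intro hae
    have hae' := ae_iff.mp hae
    rw [show {a : Torus n | ¬ coburnSymbol n a = (fun _ => (0:ℂ)) a} = Set.univ from
      Set.eq_univ_of_forall fun a => by simpa [hφ a] using char_ne_zero α₀ a] at hae'
    rw [measure_univ] at hae'
    exact one_ne_zero hae'
  · intro hinj
    have h0 : e₀ = 0 := hinj (by rw [(hkill e₀ he₀).1, map_zero])
    have : ((e₀ : L2T n) : Torus n → ℂ) =ᵐ[volume] fun _ => (0 : ℂ) := by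
      rw [h0]
      exact Lp.coeFn_zero ℂ 2 _
    exact const_not_ae_eq (n := n) one_ne_zero ((he₀.symm.trans this))
  · rw [← hadj]
    intro hinj
    have h0 : e₀ = 0 := hinj (by rw [(hkill e₀ he₀).2, map_zero])
    have : ((e₀ : L2T n) : Torus n → ℂ) =ᵐ[volume] fun _ => (0 : ℂ) := by
      rw [h0]
      exact Lp.coeFn_zero ℂ 2 _
    exact const_not_ae_eq (n := n) one_ne_zero ((he₀.symm.trans this))
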